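/- Let p be a prime divisor of n, let t = n/p, and let c be a rainbow Sidon free coloring of Z_n. For 0 ≤ i < t let R_i = i + ⟨t⟩ denote the i-th coset of the subgroup of Z_n generated by t. Then there exists an index j with 0 ≤ j < t such that |c(R_i) \ c(R_j)| ≤ 1 for all 0 ≤ i < t, where c(A) denotes the set of colors used on A. -/

import Mathlib

/-- `c` admits a rainbow solution to the Sidon equation `x₁ + x₂ = x₃ + x₄`:
a solution whose four colors are pairwise distinct. -/
def HasRainbowSidon {n : ℕ} {α : Type*} (c : ZMod n → α) : Prop :=
  ∃ x₁ x₂ x₃ x₄ : ZMod n, x₁ + x₂ = x₃ + x₄ ∧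
    c x₁ ≠ c x₂ ∧ c x₁ ≠ c x₃ ∧ c x₁ ≠ c x₄ ∧
    c x₂ ≠ c x₃ ∧ c x₂ ≠ c x₄ ∧ c x₃ ≠ c x₄

/-- The rainbow number `rb(ℤ_n, S)` of `ℤ_n` for the Sidon equation: the least `r > 0`
such that every exact (surjective) `r`-coloring of `ℤ_n` admits a rainbow Sidon solution.
(When no such `r` exists, `r = n + 1` belongs to the set vacuously, matching the
convention `rb(ℤ_n, S) = n + 1`.) -/
noncomputable def rbSidon (n : ℕ) : ℕ :=
  sInf {r : ℕ | 0 < r ∧ ∀ c : ZMod n → Fin r, Function.Surjective c → HasRainbowSidon c}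

lemma aux_lift (n p t : ℕ) (hnpt : n = p * t) (a b : ℕ) (hab : a ≡ b [MOD p]) :
    ((a : ZMod n)) * (t : ZMod n) = (b : ZMod n) * (t : ZMod n) := by
  have h0 : (p : ZMod n) * (t : ZMod n) = 0 := by
    have h : ((p * t : ℕ) : ZMod n) = 0 := by rw [← hnpt]; exact ZMod.natCast_self n
    push_cast at h
    exact h
  have hab' : a % p = b % p := hab
  have ha : (a : ZMod n) = ((p * (a / p) + a % p : ℕ) : ZMod n) := by rw [Nat.div_add_mod]
  have hb : (b : ZMod n) = ((p * (b / p) + b % p : ℕ) : ZMod n) := by rw [Nat.div_add_mod]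
  rw [ha, hb, hab']
  push_cast
  linear_combination (((a/p : ℕ) : ZMod n) - ((b/p : ℕ) : ZMod n)) * h0

theorem exists_maximum_coset (n p t : ℕ) (hn : 0 < n) (hp : p.Prime) (hdvd : p ∣ n)
    (ht : t = n / p) {α : Type*} (c : ZMod n → α) (hfree : ¬ HasRainbowSidon c)
    (R : ℕ → Set (ZMod n))
    (hR : ∀ i, R i = {x : ZMod n | ∃ s : ZMod n, x = (i : ZMod n) + s * (t : ZMod n)}) :
    ∃ j < t, ∀ i < t, (c '' R i \ c '' R j).Subsingleton := by
  haveI : NeZero n := ⟨hn.ne'⟩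
  haveI : Fact p.Prime := ⟨hp⟩
  have hnpt : n = p * t := by rw [ht, Nat.mul_div_cancel' hdvd]
  have htpos : 0 < t := by
    rw [ht]; exact Nat.div_pos (Nat.le_of_dvd hn hdvd) hp.pos
  have key : ∀ (jj ii : ℕ), ¬ (c '' R ii \ c '' R jj).Subsingleton →
      ∀ y ∈ R jj, ∀ y' ∈ R jj, c y = c y' := by
    intro jj ii hns y hy y' hy'
    rw [Set.not_subsingleton_iff] at hns
    obtain ⟨a, ha, b, hb, hab⟩ := hns
    obtain ⟨⟨x, hxR, rfl⟩, hax⟩ := ha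
    obtain ⟨⟨x', hx'R, rfl⟩, hbx⟩ := hb
    rw [hR] at hxR hx'R hy hy'
    obtain ⟨s, rfl⟩ := hxR
    obtain ⟨s', rfl⟩ := hx'R
    obtain ⟨u, rfl⟩ := hy
    obtain ⟨u', rfl⟩ := hy'
    -- step: shifting by (s - s') * t preserves the color on R jj
    have hstep : ∀ v : ZMod n,
        c ((jj : ZMod n) + v * t) = c ((jj : ZMod n) + (v + (s - s')) * t) := by
      intro v
      by_contra hne
      apply hfree
      refine ⟨(ii : ZMod n) + s * t, (jj : ZMod n) + v * t,
        (ii : ZMod n) + s' * t, (jj : ZMod n) + (v + (s - s')) * t, by ring,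
        ?_, hab, ?_, ?_, hne, ?_⟩
      · intro heq
        exact hax ⟨_, by rw [hR]; exact ⟨v, rfl⟩, heq.symm⟩
      · intro heq
        exact hax ⟨_, by rw [hR]; exact ⟨v + (s - s'), rfl⟩, heq.symm⟩
      · intro heq
        exact hbx ⟨_, by rw [hR]; exact ⟨v, rfl⟩, heq⟩
      · intro heq
        exact hbx ⟨_, by rw [hR]; exact ⟨v + (s - s'), rfl⟩, heq.symm⟩
    have hiter : ∀ (m : ℕ) (v : ZMod n),
        c ((jj : ZMod n) + v * t) = c ((jj : ZMod n) + (v + (m : ZMod n) * (s - s')) * t) := by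
      intro m
      induction m with
      | zero => intro v; norm_num
      | succ m ih =>
        intro v
        rw [ih v, hstep (v + (m : ZMod n) * (s - s'))]
        congr 2
        push_cast
        ring
    -- (s - s') * t ≠ 0
    have hστ : (s - s') * (t : ZMod n) ≠ 0 := by
      intro h0
      apply hab
      have hxx : (ii : ZMod n) + s * t = (ii : ZMod n) + s' * t := by linear_combination h0
      rw [hxx]
    have hpt0 : (p : ZMod n) * (t : ZMod n) = 0 := by
      have h : ((p * t : ℕ) : ZMod n) = 0 := by rw [← hnpt]; exact ZMod.natCast_self n
      push_cast at h
      exact h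
    have hvalcast : ∀ z : ZMod n, ((z.val : ℕ) : ZMod n) = z := by
      intro z; rw [ZMod.natCast_val, ZMod.cast_id]
    have hpσ : ¬ (p ∣ (s - s').val) := by
      intro hd
      apply hστ
      obtain ⟨w, hw⟩ := hd
      calc (s - s') * (t : ZMod n) = (((s - s').val : ℕ) : ZMod n) * t := by rw [hvalcast]
        _ = ((p * w : ℕ) : ZMod n) * t := by rw [hw]
        _ = (w : ZMod n) * ((p : ZMod n) * (t : ZMod n)) := by push_cast; ring
        _ = 0 := by rw [hpt0, mul_zero]
    have hδ : (((s - s').val : ZMod p)) ≠ 0 := by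
      rwa [Ne, ZMod.natCast_eq_zero_iff]
    set m : ℕ := (((u' - u).val : ZMod p) * ((s - s').val : ZMod p)⁻¹).val with hm
    have hmod : m * (s - s').val ≡ (u' - u).val [MOD p] := by
      have hcast : ((m * (s - s').val : ℕ) : ZMod p) = (((u' - u).val : ℕ) : ZMod p) := by
        push_cast
        rw [hm, ZMod.natCast_val, ZMod.cast_id, mul_assoc, inv_mul_cancel₀ hδ, mul_one]
      exact (ZMod.natCast_eq_natCast_iff _ _ _).mp hcast
    have hlift := aux_lift n p t hnpt _ _ hmod
    have hfin : ((m : ℕ) : ZMod n) * (s - s') * t = (u' - u) * t := by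
      calc ((m : ℕ) : ZMod n) * (s - s') * t
          = ((m * (s - s').val : ℕ) : ZMod n) * t := by
            push_cast [hvalcast]; ring
        _ = (((u' - u).val : ℕ) : ZMod n) * t := hlift
        _ = (u' - u) * t := by rw [hvalcast]
    rw [hiter m u]
    congr 2
    linear_combination hfin
  by_contra hcon
  push_neg at hcon
  obtain ⟨i₀, hi₀t, hns₀⟩ := hcon 0 htpos
  obtain ⟨i₁, hi₁t, hns₁⟩ := hcon i₀ hi₀t
  have hconst := key i₀ i₁ hns₁.not_subsingleton
  obtain ⟨a, ha, b, hb, hab⟩ := hns₀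
  obtain ⟨xa, hxa, rfl⟩ := ha.1
  obtain ⟨xb, hxb, rfl⟩ := hb.1
  exact hab (hconst _ hxa _ hxb)
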